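/- Let Γ = M^ℤ = {M^k : k ∈ ℤ} ⊆ ℚ^× for an integer M ≥ 2. For any nonzero linear polynomial L(x) = Σ_{i=1}^n c_i x_i with rational coefficients and any c ∈ ℚ, the solution set {(γ_1,…,γ_n) ∈ Γ^n : L(γ) = c} is a finite union of sets each defined by finitely many equations of the form x_i = γ (γ ∈ Γ) and x_j = δ·x_k (δ ∈ Γ). -/

import Mathlib

def cyclicPowers (M : ℕ) : Set ℚ := {q : ℚ | ∃ k : ℤ, q = (M : ℚ) ^ k}

namespace MannAux

variable {M : ℕ}

lemma one_lt_M (hM : 2 ≤ M) : (1:ℚ) < (M:ℚ) := by exact_mod_cast hM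

lemma M_ne_zero (hM : 2 ≤ M) : (M:ℚ) ≠ 0 := by positivity

lemma zpow_pos' (hM : 2 ≤ M) (k : ℤ) : 0 < (M:ℚ) ^ k :=
  zpow_pos (by positivity) k

lemma mem_ne_zero (hM : 2 ≤ M) {q : ℚ} (h : q ∈ cyclicPowers M) : q ≠ 0 := by
  obtain ⟨k, rfl⟩ := h
  exact (zpow_pos' hM k).ne'

lemma div_mem (hM : 2 ≤ M) {q r : ℚ} (hq : q ∈ cyclicPowers M)
    (hr : r ∈ cyclicPowers M) : q / r ∈ cyclicPowers M := by
  obtain ⟨k, rfl⟩ := hq; obtain ⟨l, rfl⟩ := hr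
  exact ⟨k - l, by rw [zpow_sub₀ (M_ne_zero hM)]⟩

abbrev Pattern (n : ℕ) := Finset (Fin n × ℚ) × Finset (Fin n × Fin n × ℚ)

def Sat {n : ℕ} (p : Pattern n) (γ : Fin n → ℚ) : Prop :=
  (∀ q ∈ p.1, γ q.1 = q.2) ∧ (∀ q ∈ p.2, γ q.1 = q.2.2 * γ q.2.1)

def SideOK (M : ℕ) {n : ℕ} (p : Pattern n) : Prop :=
  (∀ q ∈ p.1, q.2 ∈ cyclicPowers M) ∧ (∀ q ∈ p.2, q.2.2 ∈ cyclicPowers M)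

def Good (M : ℕ) {n : ℕ} (c : Fin n → ℚ) (c₀ : ℚ) : Prop :=
  ∃ B : Finset (Pattern n), (∀ p ∈ B, SideOK M p) ∧
    ∀ γ : Fin n → ℚ, (∀ i, γ i ∈ cyclicPowers M) →
      ((∑ i, c i * γ i = c₀) ↔ ∃ p ∈ B, Sat p γ)

lemma sat_union {n : ℕ} (p q : Pattern n) (γ : Fin n → ℚ) :
    Sat (p.1 ∪ q.1, p.2 ∪ q.2) γ ↔ Sat p γ ∧ Sat q γ := by
  unfold Sat
  simp only [Finset.mem_union]
  constructor
  · rintro ⟨h1, h2⟩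
    exact ⟨⟨fun a ha => h1 a (Or.inl ha), fun a ha => h2 a (Or.inl ha)⟩,
           ⟨fun a ha => h1 a (Or.inr ha), fun a ha => h2 a (Or.inr ha)⟩⟩
  · rintro ⟨⟨h1, h2⟩, ⟨h3, h4⟩⟩
    exact ⟨fun a ha => ha.elim (h1 a) (h3 a), fun a ha => ha.elim (h2 a) (h4 a)⟩

lemma sum_ite_eq_sub {n : ℕ} (c γ : Fin n → ℚ) (i₀ : Fin n) :
    ∑ i, (if i = i₀ then 0 else c i) * γ i = ∑ i, c i * γ i - c i₀ * γ i₀ := by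
  have ha := Finset.add_sum_erase Finset.univ (fun i => c i * γ i) (Finset.mem_univ i₀)
  have hb := Finset.add_sum_erase Finset.univ
      (fun i => (if i = i₀ then (0:ℚ) else c i) * γ i) (Finset.mem_univ i₀)
  have hc : ∑ i ∈ Finset.univ.erase i₀, (if i = i₀ then (0:ℚ) else c i) * γ i
      = ∑ i ∈ Finset.univ.erase i₀, c i * γ i :=
    Finset.sum_congr rfl (fun i hi => by rw [if_neg (Finset.ne_of_mem_erase hi)])
  simp only [eq_self_iff_true, if_true, zero_mul, zero_add] at hb
  rw [← ha, ← hb, hc]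
  ring

lemma sum_ite_mem_mul {n : ℕ} (J : Finset (Fin n)) (c γ : Fin n → ℚ) :
    ∑ i, (if i ∈ J then c i else 0) * γ i = ∑ i ∈ J, c i * γ i := by
  have h : ∀ i ∈ Finset.univ, (if i ∈ J then c i else 0) * γ i
      = if i ∈ J then c i * γ i else 0 := by
    intro i _; by_cases h : i ∈ J <;> simp [h]
  rw [Finset.sum_congr rfl h, Finset.sum_ite_mem, Finset.univ_inter]

set_option maxHeartbeats 1000000 in
lemma box (hM : 2 ≤ M) {n : ℕ} (s : Finset (Fin n)) (hsne : s.Nonempty)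
    (c : Fin n → ℚ) (hc : ∀ i ∈ s, c i ≠ 0) (c₀ : ℚ) (hc₀ : c₀ ≠ 0) :
    ∃ V : Finset ℚ, (∀ v ∈ V, v ∈ cyclicPowers M) ∧
      ∀ γ : Fin n → ℚ, (∀ i, γ i ∈ cyclicPowers M) →
        ∑ i ∈ s, c i * γ i = c₀ →
        (∃ i ∈ s, γ i ∈ V) ∨
        ∃ J ⊆ s, J.Nonempty ∧ J ≠ s ∧ ∑ i ∈ J, c i * γ i = 0 := by
  have hM0 : (M:ℚ) ≠ 0 := M_ne_zero hM
  have hM1 : (1:ℚ) < (M:ℚ) := one_lt_M hM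
  have hMpos : (0:ℚ) < M := by positivity
  -- common denominator d and integer coefficients a
  set d : ℕ := ∏ i ∈ s, (c i).den with hd
  have hdpos : 0 < d := Finset.prod_pos (fun i _ => (c i).pos)
  set a : Fin n → ℤ := fun i => ((d / (c i).den : ℕ) : ℤ) * (c i).num with haa
  have ha : ∀ i ∈ s, (a i : ℚ) = (d:ℚ) * c i := by
    intro i hi
    obtain ⟨e, he⟩ := Finset.dvd_prod_of_mem (fun i => (c i).den) hi
    rw [← hd] at he
    have hden : 0 < (c i).den := (c i).pos
    have hdiv : d / (c i).den = e := by rw [he]; exact Nat.mul_div_cancel_left e hden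
    have hnum : ((c i).den : ℚ) * c i = (c i).num := Rat.den_mul_eq_num (c i)
    rw [haa]
    simp only [hdiv]
    rw [he]
    push_cast
    linear_combination (-(e:ℚ)) * hnum
  set C : ℚ := ∑ i ∈ s, |c i| with hC
  have hCpos : 0 < C := Finset.sum_pos (fun i hi => abs_pos.mpr (hc i hi)) hsne
  set A : ℕ := (∑ i ∈ s, (a i).natAbs) + 1 with hA
  have hdCA : (d:ℚ) * C < A := by
    have h1 : (d:ℚ) * C = ∑ i ∈ s, |(a i : ℚ)| := by
      rw [hC, Finset.mul_sum]
      refine Finset.sum_congr rfl fun i hi => ?_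
      rw [ha i hi, abs_mul, abs_of_nonneg (by positivity : (0:ℚ) ≤ (d:ℚ))]
    have h2 : ∑ i ∈ s, |(a i:ℚ)| = ((∑ i ∈ s, (a i).natAbs : ℕ) : ℚ) := by
      push_cast [Nat.cast_natAbs, Int.cast_abs]
      rfl
    rw [h1, h2, hA]
    push_cast
    linarith
  set m := s.card with hm
  set G : ℕ := A with hGdef
  obtain ⟨E, hE⟩ := pow_unbounded_of_one_lt (2 * (d:ℚ) * |c₀|) hM1
  obtain ⟨F, hF⟩ := pow_unbounded_of_one_lt (C / |c₀|) hM1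
  set K₁ : ℤ := ((m * G + E : ℕ) : ℤ) with hK₁
  refine ⟨(Finset.Icc (-(F:ℤ)) K₁).image fun t => (M:ℚ)^t, ?_, ?_⟩
  · intro v hv
    obtain ⟨t, _, rfl⟩ := Finset.mem_image.mp hv
    exact ⟨t, rfl⟩
  intro γ hγ hsum
  choose k hk using hγ
  set K : ℤ := s.sup' hsne k with hK
  obtain ⟨i₁, hi₁, hKi₁⟩ := Finset.exists_mem_eq_sup' hsne k
  have hKmax : ∀ i ∈ s, k i ≤ K := fun i hi => Finset.le_sup' k hi
  have hγpos : ∀ i, 0 < γ i := fun i => (hk i) ▸ zpow_pos hMpos (k i)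
  have hγleK : ∀ i ∈ s, γ i ≤ (M:ℚ)^K := by
    intro i hi; rw [hk i]; exact zpow_le_zpow_right₀ (le_of_lt hM1) (hKmax i hi)
  have hc₀abs : 0 < |c₀| := abs_pos.mpr hc₀
  have hlow : -(F:ℤ) ≤ K := by
    have h1 : |c₀| ≤ C * (M:ℚ)^K := by
      rw [← hsum]
      calc |∑ i ∈ s, c i * γ i| ≤ ∑ i ∈ s, |c i * γ i| := Finset.abs_sum_le_sum_abs _ _
        _ ≤ ∑ i ∈ s, |c i| * (M:ℚ)^K := by
            refine Finset.sum_le_sum fun i hi => ?_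
            rw [abs_mul, abs_of_pos (hγpos i)]
            exact mul_le_mul_of_nonneg_left (hγleK i hi) (abs_nonneg _)
        _ = C * (M:ℚ)^K := by rw [hC, Finset.sum_mul]
    by_contra hcon
    push_neg at hcon
    have h2 : (M:ℚ)^K < (M:ℚ)^(-(F:ℤ)) := zpow_lt_zpow_right₀ hM1 hcon
    have h4 : (M:ℚ)^(-(F:ℤ)) = 1 / (M:ℚ)^(F:ℕ) := by
      rw [zpow_neg, zpow_natCast, one_div]
    have h3 : C / (M:ℚ)^(F:ℕ) < |c₀| := by
      rw [div_lt_iff₀ (by positivity)]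
      calc C = (C/|c₀|) * |c₀| := by field_simp
        _ < (M:ℚ)^F * |c₀| := by exact mul_lt_mul_of_pos_right hF hc₀abs
        _ = |c₀| * (M:ℚ)^F := by ring
    have h5 : C * (M:ℚ)^K < C * (M:ℚ)^(-(F:ℤ)) := mul_lt_mul_of_pos_left h2 hCpos
    rw [h4] at h5
    have h6 : C * (1/(M:ℚ)^(F:ℕ)) = C / (M:ℚ)^(F:ℕ) := by ring
    linarith
  by_cases hKb : K ≤ K₁
  · refine Or.inl ⟨i₁, hi₁, Finset.mem_image.mpr ⟨K, Finset.mem_Icc.mpr ⟨hlow, hKb⟩, ?_⟩⟩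
    rw [hk i₁, hK, hKi₁]
  push_neg at hKb
  right
  have hApos : 0 < A := Nat.succ_pos _
  have hG1 : 1 ≤ G := hApos
  have hm1 : 1 ≤ m := Finset.card_pos.mpr hsne
  have hGZ : (1:ℤ) ≤ (G:ℤ) := by exact_mod_cast hG1
  -- pigeonhole: an empty gap layer
  have pig : ∃ j : ℕ, 1 ≤ j ∧ j ≤ m ∧ ∀ i ∈ s,
      ¬(K - ((j:ℤ)+1)*G < k i ∧ k i ≤ K - (j:ℤ)*G) := by
    by_contra hcon
    push_neg at hcon
    have hcon' : ∀ j ∈ Finset.Icc 1 m, ∃ i, i ∈ s ∧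
        (K - ((j:ℤ)+1)*G < k i ∧ k i ≤ K - (j:ℤ)*G) := by
      intro j hj
      obtain ⟨h1, h2⟩ := Finset.mem_Icc.mp hj
      obtain ⟨i, hi, hh1, hh2⟩ := hcon j h1 h2
      exact ⟨i, hi, hh1, hh2⟩
    choose f hf using hcon'
    have hmaps : ∀ j ∈ Finset.Icc 1 m,
        (if h : j ∈ Finset.Icc 1 m then f j h else i₁) ∈ s.erase i₁ := by
      intro j hj
      obtain ⟨hj1, hj2⟩ := Finset.mem_Icc.mp hj
      simp only [dif_pos hj]
      have h1 := hf j hj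
      refine Finset.mem_erase.mpr ⟨?_, h1.1⟩
      intro heq
      have h2 : k (f j hj) ≤ K - (j:ℤ)*G := h1.2.2
      rw [heq, ← hKi₁] at h2
      have hj1' : (1:ℤ) ≤ (j:ℤ) := by exact_mod_cast hj1
      nlinarith
    have hcards : (s.erase i₁).card < (Finset.Icc 1 m).card := by
      rw [Finset.card_erase_of_mem hi₁, Nat.card_Icc]
      have : 0 < s.card := Finset.card_pos.mpr hsne
      omega
    obtain ⟨j, hj, j', hj', hjne, hgeq⟩ :=
      Finset.exists_ne_map_eq_of_card_lt_of_maps_to hcards hmaps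
    simp only [dif_pos hj, dif_pos hj'] at hgeq
    have h1 := hf j hj
    have h2 := hf j' hj'
    rw [hgeq] at h1
    obtain ⟨hja, hjb⟩ := Finset.mem_Icc.mp hj
    obtain ⟨hja', hjb'⟩ := Finset.mem_Icc.mp hj'
    rcases lt_or_gt_of_ne hjne with hlt | hlt
    · have hc1 : ((j:ℤ)+1) ≤ (j':ℤ) := by exact_mod_cast hlt
      have hmul : ((j:ℤ)+1) * G ≤ (j':ℤ) * G :=
        mul_le_mul_of_nonneg_right hc1 (by linarith)
      linarith [h1.2.1, h2.2.2, hmul]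
    · have hc1 : ((j':ℤ)+1) ≤ (j:ℤ) := by exact_mod_cast hlt
      have hmul : ((j':ℤ)+1) * G ≤ (j:ℤ) * G :=
        mul_le_mul_of_nonneg_right hc1 (by linarith)
      linarith [h2.2.1, h1.2.2, hmul]
  obtain ⟨j, hj1, hjm, hgap⟩ := pig
  have hjZ : (1:ℤ) ≤ (j:ℤ) := by exact_mod_cast hj1
  set jg : ℤ := (j:ℤ) * (G:ℤ) with hjg
  have hexpand : ((j:ℤ)+1)*(G:ℤ) = jg + G := by rw [hjg]; ring
  have hjgZ : (1:ℤ) ≤ jg := by nlinarith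
  have hjgm : jg ≤ (m:ℤ) * G := by
    rw [hjg]
    have : (j:ℤ) ≤ (m:ℤ) := by exact_mod_cast hjm
    nlinarith
  set J : Finset (Fin n) := s.filter (fun i => K - jg < k i) with hJdef
  have hJs : J ⊆ s := Finset.filter_subset _ _
  have hi₁J : i₁ ∈ J := by
    rw [hJdef]
    refine Finset.mem_filter.mpr ⟨hi₁, ?_⟩
    rw [← hKi₁]
    linarith
  have hJne : J.Nonempty := ⟨i₁, hi₁J⟩
  have hnotJ : ∀ i ∈ s, i ∉ J → k i ≤ K - (jg + G) := by
    intro i hi hiJ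
    have hn : ¬(K - jg < k i) := fun hcc => hiJ (Finset.mem_filter.mpr ⟨hi, hcc⟩)
    push_neg at hn
    have hg2 := hgap i hi
    rw [hexpand] at hg2
    by_contra hcc
    push_neg at hcc
    exact hg2 ⟨by linarith, hn⟩
  -- integer sum N
  set T : ℕ := j * G - 1 with hT
  have hjG1 : 1 ≤ j * G := Nat.one_le_iff_ne_zero.mpr (by positivity)
  have hTZ : (T:ℤ) = jg - 1 := by
    rw [hT, hjg]
    push_cast [Nat.cast_sub hjG1]
    ring
  set w : Fin n → ℕ := fun i => (K - k i).toNat with hw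
  have hwJ : ∀ i ∈ J, (w i : ℤ) = K - k i ∧ w i ≤ T := by
    intro i hiJ
    have h1 : k i ≤ K := hKmax i (hJs hiJ)
    have h2 : K - jg < k i := (Finset.mem_filter.mp hiJ).2
    have h3 : (w i : ℤ) = K - k i := by
      rw [hw]; simp only [Int.toNat_of_nonneg (by omega : (0:ℤ) ≤ K - k i)]
    refine ⟨h3, ?_⟩
    have h4 : (w i:ℤ) ≤ (T:ℤ) := by rw [h3, hTZ]; linarith
    exact_mod_cast h4
  set N : ℤ := ∑ i ∈ J, a i * (M:ℤ)^(T - w i) with hN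
  have hterm : ∀ i ∈ J, ((a i * (M:ℤ)^(T - w i) : ℤ) : ℚ) * (M:ℚ)^K
      = (d:ℚ) * (M:ℚ)^(T:ℕ) * (c i * γ i) := by
    intro i hiJ
    obtain ⟨hw1, hw2⟩ := hwJ i hiJ
    have hki : k i = K - (w i : ℤ) := by omega
    have hpow : (M:ℚ)^((T - w i : ℕ)) * (M:ℚ)^K
        = (M:ℚ)^(T:ℕ) * (M:ℚ)^(K - (w i:ℤ)) := by
      rw [← zpow_natCast (M:ℚ) (T - w i), ← zpow_natCast (M:ℚ) T,
        ← zpow_add₀ hM0, ← zpow_add₀ hM0]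
      congr 1
      rw [Nat.cast_sub hw2]
      ring
    push_cast
    rw [ha i (hJs hiJ), hk i, hki]
    linear_combination ((d:ℚ) * c i) * hpow
  have key : (N:ℚ) * (M:ℚ)^K = (d:ℚ) * (M:ℚ)^(T:ℕ) * ∑ i ∈ J, c i * γ i := by
    have h1 : (N:ℚ) = ∑ i ∈ J, ((a i * (M:ℤ)^(T - w i) : ℤ) : ℚ) := by
      rw [hN]; push_cast; rfl
    rw [h1, Finset.sum_mul, Finset.mul_sum]
    exact Finset.sum_congr rfl fun i hiJ => hterm i hiJ
  -- estimates
  have hsJc : ∑ i ∈ J, c i * γ i = c₀ - ∑ i ∈ s \ J, c i * γ i := by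
    have h1 := Finset.sum_sdiff hJs (f := fun i => c i * γ i)
    rw [hsum] at h1
    linarith
  have houtb : |∑ i ∈ s \ J, c i * γ i| ≤ C * (M:ℚ)^(K - (jg + G)) := by
    calc |∑ i ∈ s \ J, c i * γ i| ≤ ∑ i ∈ s \ J, |c i * γ i| :=
          Finset.abs_sum_le_sum_abs _ _
      _ ≤ ∑ i ∈ s \ J, |c i| * (M:ℚ)^(K - (jg+G)) := by
          refine Finset.sum_le_sum fun i hi => ?_
          obtain ⟨his, hinJ⟩ := Finset.mem_sdiff.mp hi
          rw [abs_mul, abs_of_pos (hγpos i)]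
          refine mul_le_mul_of_nonneg_left ?_ (abs_nonneg _)
          rw [hk i]
          exact zpow_le_zpow_right₀ (le_of_lt hM1) (hnotJ i his hinJ)
      _ ≤ ∑ i ∈ s, |c i| * (M:ℚ)^(K-(jg+G)) := by
          refine Finset.sum_le_sum_of_subset_of_nonneg (Finset.sdiff_subset) ?_
          intro i _ _
          positivity
      _ = C * (M:ℚ)^(K-(jg+G)) := by rw [hC, Finset.sum_mul]
  have hNbound : |(N:ℚ)| * (M:ℚ)^K
      ≤ (d:ℚ) * (M:ℚ)^(T:ℕ) * (|c₀| + C * (M:ℚ)^(K - (jg+G))) := by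
    have h1 : |(N:ℚ)| * (M:ℚ)^K = |(N:ℚ) * (M:ℚ)^K| := by
      rw [abs_mul, abs_of_pos (zpow_pos hMpos K)]
    rw [h1, key, abs_mul, abs_of_pos (by positivity : 0 < (d:ℚ) * (M:ℚ)^(T:ℕ))]
    refine mul_le_mul_of_nonneg_left ?_ (by positivity)
    rw [hsJc]
    calc |c₀ - ∑ i ∈ s\J, c i * γ i| ≤ |c₀| + |∑ i ∈ s\J, c i * γ i| := abs_sub _ _
      _ ≤ |c₀| + C * (M:ℚ)^(K - (jg+G)) := by linarith
  -- the two pieces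
  have hKK₁ : K₁ < K := hKb
  have hK₁Z : K₁ = (m:ℤ) * G + E := by rw [hK₁]; push_cast; ring
  have piece1 : (d:ℚ) * (M:ℚ)^(T:ℕ) * |c₀| < (M:ℚ)^K / 2 := by
    have e1 : (M:ℚ)^K = (M:ℚ)^(T:ℕ) * (M:ℚ)^(K - (T:ℤ)) := by
      rw [← zpow_natCast (M:ℚ) T, ← zpow_add₀ hM0]
      congr 1
      ring
    have e2 : (M:ℚ)^((E:ℤ)) ≤ (M:ℚ)^(K - (T:ℤ)) := by
      refine zpow_le_zpow_right₀ (le_of_lt hM1) ?_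
      rw [hTZ]
      linarith [hjgm, hKb, hK₁Z]
    have e3 : 2 * (d:ℚ) * |c₀| < (M:ℚ)^(K - (T:ℤ)) := by
      refine lt_of_lt_of_le ?_ e2
      rw [zpow_natCast]
      exact hE
    have hMT : 0 < (M:ℚ)^(T:ℕ) := by positivity
    nlinarith
  have piece2 : (d:ℚ) * (M:ℚ)^(T:ℕ) * (C * (M:ℚ)^(K - (jg+G))) < (M:ℚ)^K / 2 := by
    have e4 : (M:ℚ)^(T:ℕ) * (M:ℚ)^(K - (jg+G)) = (M:ℚ)^(K - (G:ℤ) - 1) := by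
      rw [← zpow_natCast (M:ℚ) T, ← zpow_add₀ hM0]
      congr 1
      rw [hTZ]
      ring
    have e5 : 2*(A:ℚ) ≤ (M:ℚ)^(G+1:ℕ) := by
      have h1 : 2 * A < 2 ^ (A + 1) := by
        have := Nat.lt_two_pow_self (n := A)
        calc 2 * A < 2 * 2^A := by omega
          _ = 2^(A+1) := by ring
      have h2 : (2:ℕ) ^ (A+1) ≤ M ^ (A+1) := Nat.pow_le_pow_left hM _
      have h3 : 2 * A ≤ M ^ (A + 1) := le_of_lt (lt_of_lt_of_le h1 h2)
      rw [hGdef]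
      exact_mod_cast h3
    have e6 : (M:ℚ)^K = (M:ℚ)^(K - (G:ℤ) - 1) * (M:ℚ)^((G+1:ℕ):ℤ) := by
      rw [← zpow_add₀ hM0]
      congr 1
      push_cast
      ring
    have hMKG : 0 < (M:ℚ)^(K - (G:ℤ) - 1) := zpow_pos hMpos _
    have h7 : (d:ℚ) * (M:ℚ)^(T:ℕ) * (C * (M:ℚ)^(K - (jg+G)))
        = ((d:ℚ)*C) * ((M:ℚ)^(T:ℕ) * (M:ℚ)^(K - (jg+G))) := by ring
    rw [h7, e4]
    have h8 : ((d:ℚ)*C) * (M:ℚ)^(K - (G:ℤ) - 1) < (A:ℚ) * (M:ℚ)^(K - (G:ℤ) - 1) :=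
      mul_lt_mul_of_pos_right hdCA hMKG
    have h9 : (A:ℚ) * (M:ℚ)^(K - (G:ℤ) - 1) ≤ (M:ℚ)^K / 2 := by
      have e5' : 2*(A:ℚ) ≤ (M:ℚ)^(((G+1:ℕ)):ℤ) := by
        rw [zpow_natCast]; exact_mod_cast e5
      rw [e6]
      nlinarith [hMKG, e5']
    linarith
  have hNlt : |(N:ℚ)| < 1 := by
    have hMK : 0 < (M:ℚ)^K := zpow_pos hMpos K
    have h1 : (d:ℚ) * (M:ℚ)^(T:ℕ) * (|c₀| + C * (M:ℚ)^(K - (jg+G))) < (M:ℚ)^K := by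
      have : (d:ℚ) * (M:ℚ)^(T:ℕ) * (|c₀| + C * (M:ℚ)^(K - (jg+G)))
          = (d:ℚ) * (M:ℚ)^(T:ℕ) * |c₀| + (d:ℚ) * (M:ℚ)^(T:ℕ) * (C * (M:ℚ)^(K - (jg+G))) := by
        ring
      rw [this]
      linarith
    have h2 : |(N:ℚ)| * (M:ℚ)^K < 1 * (M:ℚ)^K := by
      rw [one_mul]
      exact lt_of_le_of_lt hNbound h1
    exact lt_of_mul_lt_mul_right h2 (le_of_lt hMK)
  have hN0 : N = 0 := by
    have h1 : |N| < 1 := by exact_mod_cast hNlt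
    exact Int.abs_lt_one_iff.mp h1
  have hsum0 : ∑ i ∈ J, c i * γ i = 0 := by
    have h0 : (0:ℚ) = (d:ℚ) * (M:ℚ)^(T:ℕ) * ∑ i ∈ J, c i * γ i := by
      rw [← key, hN0]
      simp
    have hd0 : (d:ℚ) * (M:ℚ)^(T:ℕ) ≠ 0 := by positivity
    rcases mul_eq_zero.mp h0.symm with h | h
    · exact absurd h hd0
    · exact h
  have hJns : J ≠ s := by
    intro heq
    rw [heq, hsum] at hsum0
    exact hc₀ hsum0
  exact ⟨J, hJs, hJne, hJns, hsum0⟩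

lemma good_of_supp_empty (hM : 2 ≤ M) {n : ℕ} (c : Fin n → ℚ) (c₀ : ℚ)
    (h : ∀ i, c i = 0) : Good M c c₀ := by
  by_cases h0 : c₀ = 0
  · refine ⟨{(∅, ∅)}, ?_, ?_⟩
    · intro p hp
      simp only [Finset.mem_singleton] at hp
      subst hp
      constructor <;> intro q hq <;> simp at hq
    · intro γ hγ
      constructor
      · intro _; exact ⟨(∅, ∅), by simp, by constructor <;> intro q hq <;> simp at hq⟩
      · intro _
        simp only [h, zero_mul, Finset.sum_const_zero]
        exact h0.symm
  · refine ⟨∅, by simp, ?_⟩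
    intro γ hγ
    constructor
    · intro hs
      exfalso; apply h0
      rw [← hs]
      simp [h]
    · intro ⟨p, hp, _⟩; simp at hp

set_option maxHeartbeats 1000000 in
lemma good_main (hM : 2 ≤ M) {n : ℕ} :
    ∀ m : ℕ, ∀ c : Fin n → ℚ, ∀ c₀ : ℚ,
      (Finset.univ.filter fun i => c i ≠ 0).card ≤ m → Good M c c₀ := by
  intro m
  induction m with
  | zero =>
    intro c c₀ hcard
    apply good_of_supp_empty hM
    intro i
    by_contra hne
    have hmem : i ∈ Finset.univ.filter fun i => c i ≠ 0 := by simp [hne]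
    have := Finset.card_pos.mpr ⟨i, hmem⟩
    omega
  | succ m IH =>
    intro c c₀ hcard
    set s := Finset.univ.filter fun i => c i ≠ 0 with hs
    rcases s.eq_empty_or_nonempty with hse | hsne
    · apply good_of_supp_empty hM
      intro i
      by_contra hne
      have hmem : i ∈ s := by rw [hs]; simp [hne]
      rw [hse] at hmem; simp at hmem
    · have hcs : ∀ i ∈ s, c i ≠ 0 := fun i hi => (Finset.mem_filter.mp hi).2
      have hcns : ∀ i, i ∉ s → c i = 0 := by
        intro i hi
        by_contra hne
        exact hi (Finset.mem_filter.mpr ⟨Finset.mem_univ i, hne⟩)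
      have hsum_s : ∀ γ : Fin n → ℚ, ∑ i ∈ s, c i * γ i = ∑ i, c i * γ i := by
        intro γ
        apply Finset.sum_subset (Finset.subset_univ s)
        intro i _ hi
        rw [hcns i hi, zero_mul]
      by_cases hc₀ : c₀ = 0
      · -- Case c₀ = 0 : divide by γ i₀
        subst hc₀
        obtain ⟨i₀, hi₀⟩ := hsne
        have hcard' : (Finset.univ.filter fun i => (if i = i₀ then (0:ℚ) else c i) ≠ 0).card ≤ m := by
          have hsub : (Finset.univ.filter fun i => (if i = i₀ then (0:ℚ) else c i) ≠ 0)
              ⊆ s.erase i₀ := by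
            intro i hi
            simp only [Finset.mem_filter] at hi
            by_cases h : i = i₀
            · simp [h] at hi
            · exact Finset.mem_erase.mpr ⟨h, Finset.mem_filter.mpr
                ⟨Finset.mem_univ i, by simpa [h] using hi.2⟩⟩
          have h1 := Finset.card_le_card hsub
          rw [Finset.card_erase_of_mem hi₀] at h1
          omega
        obtain ⟨B', hB'side, hB'iff⟩ := IH (fun i => if i = i₀ then (0:ℚ) else c i) (-(c i₀)) hcard'
        refine ⟨B'.image fun p => (∅, p.1.image (fun q => (q.1, i₀, q.2)) ∪ p.2), ?_, ?_⟩
        · intro p hp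
          obtain ⟨p', hp', rfl⟩ := Finset.mem_image.mp hp
          constructor
          · intro q hq; simp at hq
          · intro q hq
            rcases Finset.mem_union.mp hq with h | h
            · obtain ⟨q', hq', rfl⟩ := Finset.mem_image.mp h
              exact (hB'side p' hp').1 q' hq'
            · exact (hB'side p' hp').2 q h
        · intro γ hγ
          have hγ0 : ∀ i, γ i ≠ 0 := fun i => mem_ne_zero hM (hγ i)
          set δ : Fin n → ℚ := fun i => γ i / γ i₀ with hδdef
          have hδ : ∀ i, δ i ∈ cyclicPowers M := fun i => div_mem hM (hγ i) (hγ i₀)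
          have hδsum : ∑ i, (if i = i₀ then (0:ℚ) else c i) * δ i
              = (∑ i, c i * γ i) / γ i₀ - c i₀ := by
            rw [sum_ite_eq_sub c δ i₀]
            have h2 : ∑ i, c i * δ i = (∑ i, c i * γ i) / γ i₀ := by
              rw [Finset.sum_div]
              exact Finset.sum_congr rfl fun i _ => by rw [hδdef]; ring
            have h3 : δ i₀ = 1 := by rw [hδdef]; exact div_self (hγ0 i₀)
            rw [h2, h3, mul_one]
          have key : (∑ i, c i * γ i = 0) ↔
              ∑ i, (if i = i₀ then (0:ℚ) else c i) * δ i = -(c i₀) := by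
            rw [hδsum]
            constructor
            · intro h; rw [h]; simp
            · intro h
              have h4 : (∑ i, c i * γ i) / γ i₀ = 0 := by linarith
              exact (div_eq_zero_iff.mp h4).resolve_right (hγ0 i₀)
          rw [key, hB'iff δ hδ]
          constructor
          · rintro ⟨p', hp', hsat1, hsat2⟩
            refine ⟨(∅, p'.1.image (fun q => (q.1, i₀, q.2)) ∪ p'.2),
              Finset.mem_image_of_mem _ hp', ?_, ?_⟩
            · intro q hq; simp at hq
            · intro q hq
              rcases Finset.mem_union.mp hq with h | h
              · obtain ⟨q', hq', rfl⟩ := Finset.mem_image.mp h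
                have h5 := hsat1 q' hq'
                simp only [hδdef] at h5
                exact (div_eq_iff (hγ0 i₀)).mp h5
              · have h5 := hsat2 q h
                simp only [hδdef] at h5
                rw [← mul_div_assoc, div_eq_div_iff (hγ0 i₀) (hγ0 i₀),
                  mul_left_inj' (hγ0 i₀)] at h5
                exact h5
          · rintro ⟨p, hp, hsata, hsatb⟩
            obtain ⟨p', hp', rfl⟩ := Finset.mem_image.mp hp
            refine ⟨p', hp', ?_, ?_⟩
            · intro q hq
              have h5 := hsatb (q.1, i₀, q.2)
                (Finset.mem_union_left _ (Finset.mem_image_of_mem _ hq))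
              simp only [hδdef]
              rw [div_eq_iff (hγ0 i₀)]
              exact h5
            · intro q hq
              have h5 := hsatb q (Finset.mem_union_right _ hq)
              simp only [hδdef]
              rw [← mul_div_assoc, div_eq_div_iff (hγ0 i₀) (hγ0 i₀),
                mul_left_inj' (hγ0 i₀)]
              exact h5
      · -- Case c₀ ≠ 0
        obtain ⟨V, hV, hbox⟩ := box hM s hsne c hcs c₀ hc₀
        have h1 : ∀ J : Finset (Fin n), ∃ P : Finset (Pattern n) × Finset (Pattern n),
            J.Nonempty → J ≠ s → J ⊆ s →
              ((∀ p ∈ P.1, SideOK M p) ∧ ∀ γ : Fin n → ℚ, (∀ i, γ i ∈ cyclicPowers M) →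
                ((∑ i, (if i ∈ J then c i else 0) * γ i = 0) ↔ ∃ p ∈ P.1, Sat p γ)) ∧
              ((∀ p ∈ P.2, SideOK M p) ∧ ∀ γ : Fin n → ℚ, (∀ i, γ i ∈ cyclicPowers M) →
                ((∑ i, (if i ∈ J then 0 else c i) * γ i = c₀) ↔ ∃ p ∈ P.2, Sat p γ)) := by
          intro J
          by_cases hJ : J.Nonempty ∧ J ≠ s ∧ J ⊆ s
          · obtain ⟨hJne, hJns, hJs⟩ := hJ
            have hJlt : J.card < s.card := Finset.card_lt_card (ssubset_of_subset_of_ne hJs hJns)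
            have hcard1 : (Finset.univ.filter fun i => (if i ∈ J then c i else 0) ≠ 0).card ≤ m := by
              have hsub : (Finset.univ.filter fun i => (if i ∈ J then c i else 0) ≠ 0) ⊆ J := by
                intro i hi
                simp only [Finset.mem_filter] at hi
                by_contra h
                simp [h] at hi
              have := Finset.card_le_card hsub
              omega
            have hcard2 : (Finset.univ.filter fun i => (if i ∈ J then 0 else c i) ≠ 0).card ≤ m := by
              have hsub : (Finset.univ.filter fun i => (if i ∈ J then 0 else c i) ≠ 0)
                  ⊆ s \ J := by
                intro i hi
                simp only [Finset.mem_filter] at hi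
                rw [Finset.mem_sdiff]
                by_cases h : i ∈ J
                · simp [h] at hi
                · exact ⟨Finset.mem_filter.mpr ⟨Finset.mem_univ i, by simpa [h] using hi.2⟩, h⟩
              have h3 : (s \ J).card = s.card - J.card := Finset.card_sdiff_of_subset hJs
              have h4 := Finset.card_le_card hsub
              have h5 : 1 ≤ J.card := Finset.card_pos.mpr hJne
              omega
            obtain ⟨B1, hB1side, hB1iff⟩ := IH _ 0 hcard1
            obtain ⟨B2, hB2side, hB2iff⟩ := IH _ c₀ hcard2
            exact ⟨(B1, B2), fun _ _ _ => ⟨⟨hB1side, hB1iff⟩, ⟨hB2side, hB2iff⟩⟩⟩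
          · refine ⟨(∅, ∅), fun ha hb hcc => absurd ⟨ha, hb, hcc⟩ hJ⟩
        choose F hF using h1
        have h2 : ∀ iv : Fin n × ℚ, ∃ P : Finset (Pattern n),
            iv.1 ∈ s → iv.2 ∈ V →
              (∀ p ∈ P, SideOK M p) ∧ ∀ γ : Fin n → ℚ, (∀ i, γ i ∈ cyclicPowers M) →
                ((∑ i, (if i = iv.1 then 0 else c i) * γ i = c₀ - c iv.1 * iv.2)
                  ↔ ∃ p ∈ P, Sat p γ) := by
          intro iv
          by_cases hiv : iv.1 ∈ s
          · have hcard3 : (Finset.univ.filter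
                fun i => (if i = iv.1 then (0:ℚ) else c i) ≠ 0).card ≤ m := by
              have hsub : (Finset.univ.filter fun i => (if i = iv.1 then (0:ℚ) else c i) ≠ 0)
                  ⊆ s.erase iv.1 := by
                intro i hi
                simp only [Finset.mem_filter] at hi
                by_cases h : i = iv.1
                · simp [h] at hi
                · exact Finset.mem_erase.mpr ⟨h, Finset.mem_filter.mpr
                    ⟨Finset.mem_univ i, by simpa [h] using hi.2⟩⟩
              have h1 := Finset.card_le_card hsub
              rw [Finset.card_erase_of_mem hiv] at h1
              omega
            obtain ⟨B3, hB3side, hB3iff⟩ := IH _ (c₀ - c iv.1 * iv.2) hcard3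
            exact ⟨B3, fun _ _ => ⟨hB3side, hB3iff⟩⟩
          · exact ⟨∅, fun h _ => absurd h hiv⟩
        choose G hG using h2
        refine ⟨((s.powerset.filter fun J => J.Nonempty ∧ J ≠ s).biUnion fun J =>
            ((F J).1 ×ˢ (F J).2).image fun pq => (pq.1.1 ∪ pq.2.1, pq.1.2 ∪ pq.2.2))
          ∪ (s ×ˢ V).biUnion fun iv =>
            (G iv).image fun p => (insert (iv.1, iv.2) p.1, p.2), ?_, ?_⟩
        · intro p hp
          rcases Finset.mem_union.mp hp with hp | hp
          · obtain ⟨J, hJ, hp⟩ := Finset.mem_biUnion.mp hp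
            simp only [Finset.mem_filter, Finset.mem_powerset] at hJ
            obtain ⟨hJs, hJne, hJns⟩ := hJ
            obtain ⟨pq, hpq, rfl⟩ := Finset.mem_image.mp hp
            obtain ⟨hpq1, hpq2⟩ := Finset.mem_product.mp hpq
            have hFa := (hF J hJne hJns hJs).1.1 pq.1 hpq1
            have hFb := (hF J hJne hJns hJs).2.1 pq.2 hpq2
            constructor
            · intro q hq
              rcases Finset.mem_union.mp hq with h | h
              · exact hFa.1 q h
              · exact hFb.1 q h
            · intro q hq
              rcases Finset.mem_union.mp hq with h | h
              · exact hFa.2 q h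
              · exact hFb.2 q h
          · obtain ⟨iv, hiv, hp⟩ := Finset.mem_biUnion.mp hp
            obtain ⟨hiv1, hiv2⟩ := Finset.mem_product.mp hiv
            obtain ⟨p', hp', rfl⟩ := Finset.mem_image.mp hp
            have hGp := (hG iv hiv1 hiv2).1 p' hp'
            constructor
            · intro q hq
              rcases Finset.mem_insert.mp hq with h | h
              · rw [h]; exact hV iv.2 hiv2
              · exact hGp.1 q h
            · exact hGp.2
        · intro γ hγ
          have hsplit : ∀ J : Finset (Fin n), ∑ i, c i * γ i
              = (∑ i, (if i ∈ J then c i else 0) * γ i)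
                + ∑ i, (if i ∈ J then 0 else c i) * γ i := by
            intro J
            rw [← Finset.sum_add_distrib]
            refine Finset.sum_congr rfl fun i _ => ?_
            by_cases h : i ∈ J <;> simp [h]
          constructor
          · intro hsum
            rcases hbox γ hγ (by rw [hsum_s γ]; exact hsum) with
              ⟨i₁, hi₁, hvV⟩ | ⟨J, hJs, hJne, hJns, hJ0⟩
            · have hup : ∑ i, (if i = i₁ then 0 else c i) * γ i = c₀ - c i₁ * γ i₁ := by
                rw [sum_ite_eq_sub c γ i₁, hsum]
              obtain ⟨p', hp', hsat'⟩ := ((hG (i₁, γ i₁) hi₁ hvV).2 γ hγ).1 hup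
              refine ⟨(insert (i₁, γ i₁) p'.1, p'.2), ?_, ?_, hsat'.2⟩
              · apply Finset.mem_union_right
                apply Finset.mem_biUnion.mpr
                exact ⟨(i₁, γ i₁), Finset.mem_product.mpr ⟨hi₁, hvV⟩,
                  Finset.mem_image_of_mem _ hp'⟩
              · intro q hq
                rcases Finset.mem_insert.mp hq with h | h
                · subst h; rfl
                · exact hsat'.1 q h
            · have hsJ : ∑ i, (if i ∈ J then c i else 0) * γ i = 0 := by
                rw [sum_ite_mem_mul]; exact hJ0
              have hsJ' : ∑ i, (if i ∈ J then 0 else c i) * γ i = c₀ := by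
                have := hsplit J
                rw [hsJ, zero_add] at this
                rw [← this]; exact hsum
              obtain ⟨p1, hp1, hsat1⟩ := ((hF J hJne hJns hJs).1.2 γ hγ).1 hsJ
              obtain ⟨p2, hp2, hsat2⟩ := ((hF J hJne hJns hJs).2.2 γ hγ).1 hsJ'
              refine ⟨(p1.1 ∪ p2.1, p1.2 ∪ p2.2), ?_, (sat_union p1 p2 γ).mpr ⟨hsat1, hsat2⟩⟩
              apply Finset.mem_union_left
              apply Finset.mem_biUnion.mpr
              refine ⟨J, ?_, ?_⟩
              · simp only [Finset.mem_filter, Finset.mem_powerset]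
                exact ⟨hJs, hJne, hJns⟩
              · exact Finset.mem_image.mpr ⟨(p1, p2), Finset.mem_product.mpr ⟨hp1, hp2⟩, rfl⟩
          · rintro ⟨p, hp, hsat⟩
            rcases Finset.mem_union.mp hp with hp | hp
            · obtain ⟨J, hJ, hp⟩ := Finset.mem_biUnion.mp hp
              simp only [Finset.mem_filter, Finset.mem_powerset] at hJ
              obtain ⟨hJs, hJne, hJns⟩ := hJ
              obtain ⟨pq, hpq, rfl⟩ := Finset.mem_image.mp hp
              obtain ⟨hpq1, hpq2⟩ := Finset.mem_product.mp hpq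
              obtain ⟨hsat1, hsat2⟩ := (sat_union pq.1 pq.2 γ).mp hsat
              have e1 := ((hF J hJne hJns hJs).1.2 γ hγ).2 ⟨pq.1, hpq1, hsat1⟩
              have e2 := ((hF J hJne hJns hJs).2.2 γ hγ).2 ⟨pq.2, hpq2, hsat2⟩
              rw [hsplit J, e1, e2, zero_add]
            · obtain ⟨iv, hiv, hp⟩ := Finset.mem_biUnion.mp hp
              obtain ⟨hiv1, hiv2⟩ := Finset.mem_product.mp hiv
              obtain ⟨p', hp', rfl⟩ := Finset.mem_image.mp hp
              have hveq : γ iv.1 = iv.2 := hsat.1 (iv.1, iv.2) (Finset.mem_insert_self _ _)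
              have hsat' : Sat p' γ := ⟨fun q hq => hsat.1 q (Finset.mem_insert_of_mem hq), hsat.2⟩
              have e3 := ((hG iv hiv1 hiv2).2 γ hγ).2 ⟨p', hp', hsat'⟩
              rw [sum_ite_eq_sub c γ iv.1, hveq] at e3
              linarith

end MannAux

theorem mann_solution_set_cyclic_powers
    (M : ℕ) (hM : 2 ≤ M) (n : ℕ)
    (c : Fin n → ℚ) (hc : ∃ i, c i ≠ 0) (c₀ : ℚ) :
    ∃ B : Finset (Finset (Fin n × ℚ) × Finset (Fin n × Fin n × ℚ)),
      (∀ p ∈ B, (∀ q ∈ p.1, q.2 ∈ cyclicPowers M) ∧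
        (∀ q ∈ p.2, q.2.2 ∈ cyclicPowers M)) ∧
      {γ : Fin n → ℚ | (∀ i, γ i ∈ cyclicPowers M) ∧ ∑ i, c i * γ i = c₀} =
        ⋃ p ∈ B, {γ : Fin n → ℚ | (∀ i, γ i ∈ cyclicPowers M) ∧
          (∀ q ∈ p.1, γ q.1 = q.2) ∧ (∀ q ∈ p.2, γ q.1 = q.2.2 * γ q.2.1)} := by
  obtain ⟨B, hside, hiff⟩ := MannAux.good_main hM (n := n)
    (Finset.univ.filter fun i => c i ≠ 0).card c c₀ le_rfl
  refine ⟨B, fun p hp => hside p hp, ?_⟩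
  ext γ
  simp only [Set.mem_setOf_eq, Set.mem_iUnion]
  constructor
  · rintro ⟨hγ, hsum⟩
    obtain ⟨p, hp, hsat⟩ := (hiff γ hγ).1 hsum
    exact ⟨p, hp, hγ, hsat.1, hsat.2⟩
  · rintro ⟨p, hp, hγ, h1, h2⟩
    exact ⟨hγ, (hiff γ hγ).2 ⟨p, hp, h1, h2⟩⟩
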